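/- Every Haar-open universally measurable subset A of an uncountable Abelian Polish group X is not Haar-null. -/

import Mathlib

open MeasureTheory Topology
open scoped ENNReal NNReal

lemma exists_compact_pos' {X : Type*} [TopologicalSpace X] [PolishSpace X] [MeasurableSpace X]
    [BorelSpace X] [Nonempty X] (μ : Measure X) [IsProbabilityMeasure μ] :
    ∃ K : Set X, IsCompact K ∧ 0 < μ K := by
  letI := TopologicalSpace.upgradeIsCompletelyMetrizable X
  obtain ⟨u, hu⟩ := TopologicalSpace.exists_dense_seq X
  have key : ∀ k : ℕ, ∃ n : ℕ,
      μ (⋃ i ∈ Set.Iic n, Metric.closedBall (u i) ((k + 1 : ℝ)⁻¹))ᶜ ≤ 2⁻¹ ^ (k + 2) := by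
    intro k
    set D : ℕ → Set X := fun n => ⋃ i ∈ Set.Iic n, Metric.closedBall (u i) ((k + 1 : ℝ)⁻¹)
      with hD
    have hmono : Monotone D := by
      intro m n hmn
      exact Set.biUnion_subset_biUnion_left (Set.Iic_subset_Iic.2 hmn)
    have hmeas : ∀ n, MeasurableSet (D n) := by
      intro n
      exact MeasurableSet.biUnion (Set.to_countable _)
        (fun i _ => Metric.isClosed_closedBall.measurableSet)
    have hunion : ⋃ n, D n = Set.univ := Set.eq_univ_of_forall (fun x => by
      have hr : (0 : ℝ) < (k + 1 : ℝ)⁻¹ := by positivity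
      obtain ⟨i, hi⟩ := Metric.denseRange_iff.1 hu x _ hr
      exact Set.mem_iUnion.2 ⟨i, Set.mem_biUnion (Set.mem_Iic.2 le_rfl)
        (Metric.mem_closedBall.2 (le_of_lt hi))⟩)
    have hlim := tendsto_measure_iUnion_atTop (μ := μ) hmono
    rw [hunion, measure_univ] at hlim
    have hεpos : (0 : ℝ≥0∞) < 2⁻¹ ^ (k + 2) := ENNReal.pow_pos (by norm_num) _
    have hlt : (1 : ℝ≥0∞) - 2⁻¹ ^ (k + 2) < 1 :=
      ENNReal.sub_lt_self ENNReal.one_ne_top one_ne_zero hεpos.ne'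
    obtain ⟨n, hn⟩ := (hlim.eventually (eventually_gt_nhds hlt)).exists
    refine ⟨n, ?_⟩
    have h1 : μ (D n)ᶜ = 1 - μ (D n) := by
      rw [measure_compl (hmeas n) (measure_ne_top μ _), measure_univ]
    rw [h1]
    calc (1 : ℝ≥0∞) - μ (D n) ≤ 1 - (1 - 2⁻¹ ^ (k + 2)) := tsub_le_tsub_left hn.le 1
      _ = 2⁻¹ ^ (k + 2) := ENNReal.sub_sub_cancel ENNReal.one_ne_top (pow_le_one' (by norm_num) _)
  choose n hn using key
  set C : ℕ → Set X := fun k => ⋃ i ∈ Set.Iic (n k), Metric.closedBall (u i) ((k + 1 : ℝ)⁻¹)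
    with hC
  have hCclosed : ∀ k, IsClosed (C k) := fun k =>
    (Set.finite_Iic (n k)).isClosed_biUnion (fun i _ => Metric.isClosed_closedBall)
  refine ⟨⋂ k, C k, ?_, ?_⟩
  · refine TotallyBounded.isCompact_of_isClosed ?_ (isClosed_iInter hCclosed)
    rw [Metric.totallyBounded_iff]
    intro ε hε
    obtain ⟨k, hk⟩ := exists_nat_one_div_lt hε
    refine ⟨u '' Set.Iic (n k), ((Set.finite_Iic (n k)).image u), ?_⟩
    intro x hx
    have hx' : x ∈ ⋃ i ∈ Set.Iic (n k), Metric.closedBall (u i) ((k + 1 : ℝ)⁻¹) :=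
      Set.mem_iInter.1 hx k
    obtain ⟨i, hi, hxi⟩ := Set.mem_iUnion₂.1 hx'
    refine Set.mem_biUnion (Set.mem_image_of_mem u hi) ?_
    have : ((k : ℝ) + 1)⁻¹ < ε := by
      rw [one_div] at hk; exact_mod_cast hk
    exact Metric.closedBall_subset_ball this hxi
  · by_contra h
    simp only [not_lt, nonpos_iff_eq_zero] at h
    have hcompl : (⋂ k, C k)ᶜ = ⋃ k, (C k)ᶜ := by simp [Set.compl_iInter]
    have h1 : (1 : ℝ≥0∞) ≤ μ (⋂ k, C k) + μ (⋂ k, C k)ᶜ := by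
      rw [← measure_univ (μ := μ), ← Set.union_compl_self (⋂ k, C k)]
      exact measure_union_le _ _
    rw [h, zero_add, hcompl] at h1
    have h2 : μ (⋃ k, (C k)ᶜ) ≤ ∑' k, μ (C k)ᶜ := measure_iUnion_le _
    have h3 : ∑' k : ℕ, μ (C k)ᶜ ≤ ∑' k : ℕ, (2 : ℝ≥0∞)⁻¹ ^ (k + 2) :=
      ENNReal.tsum_le_tsum (fun k => hn k)
    have h4 : ∑' k : ℕ, (2 : ℝ≥0∞)⁻¹ ^ (k + 2) = 2⁻¹ := by
      calc ∑' k : ℕ, (2 : ℝ≥0∞)⁻¹ ^ (k + 2)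
          = ∑' k : ℕ, (2 : ℝ≥0∞)⁻¹ ^ 2 * 2⁻¹ ^ k :=
            tsum_congr (fun k => by rw [← pow_add, add_comm])
        _ = (2 : ℝ≥0∞)⁻¹ ^ 2 * (1 - 2⁻¹)⁻¹ := by
            rw [ENNReal.tsum_mul_left, ENNReal.tsum_geometric]
        _ = 2⁻¹ := by
            rw [ENNReal.one_sub_inv_two, inv_inv, pow_two, mul_assoc,
              ENNReal.inv_mul_cancel (by norm_num) (by norm_num), mul_one]
    have : (1 : ℝ≥0∞) ≤ 2⁻¹ := h1.trans (h2.trans (h3.trans_eq h4))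
    norm_num at this

/-- Haar-open set. -/
def IsHaarOpen {X : Type*} [TopologicalSpace X] [AddCommGroup X] (A : Set X) : Prop :=
  ∀ K : Set X, IsCompact K → ∀ p ∈ K, ∃ y : X, K ∩ {z | z - y ∈ A} ∈ 𝓝[K] p

/-- Haar-null set: some Borel probability measure vanishes on all translates of `A`. -/
def IsHaarNull {X : Type*} [TopologicalSpace X] [AddCommGroup X] [MeasurableSpace X]
    (A : Set X) : Prop :=
  ∃ μ : Measure X, IsProbabilityMeasure μ ∧ ∀ x : X, μ {y | y - x ∈ A} = 0

/-- Universally measurable set: null-measurable for every Borel probability measure. -/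
def UniversallyMeasurable {X : Type*} [MeasurableSpace X] (A : Set X) : Prop :=
  ∀ μ : Measure X, IsProbabilityMeasure μ → NullMeasurableSet A μ

/-- In an uncountable Abelian Polish group, every Haar-open universally measurable set is not
Haar-null. -/
theorem statement18 {X : Type*} [TopologicalSpace X] [AddCommGroup X] [IsTopologicalAddGroup X]
    [PolishSpace X] [MeasurableSpace X] [BorelSpace X] [Uncountable X]
    (A : Set X) (hA : UniversallyMeasurable A) (hopen : IsHaarOpen A) :
    ¬ IsHaarNull A := by
  rintro ⟨μ, hprob, hnull⟩
  haveI := hprob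
  obtain ⟨K, hKc, hKpos⟩ := exists_compact_pos' μ
  choose y hy using fun p (hp : p ∈ K) => hopen K hKc p hp
  have hU : ∀ p (hp : p ∈ K), ∃ U : Set X, IsOpen U ∧ p ∈ U ∧
      U ∩ K ⊆ {z | z - y p hp ∈ A} := by
    intro p hp
    rcases mem_nhdsWithin.1 (hy p hp) with ⟨U, hUo, hpU, hsub⟩
    exact ⟨U, hUo, hpU, fun z hz => (hsub hz).2⟩
  choose U hUo hpU hUsub using hU
  obtain ⟨t, hcov⟩ := hKc.elim_nhds_subcover' U
    (fun p hp => (hUo p hp).mem_nhds (hpU p hp))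
  have hKsub : K ⊆ ⋃ x ∈ t, {z | z - y x x.2 ∈ A} := by
    intro z hz
    obtain ⟨x, hxmem, hxz⟩ := Set.mem_iUnion₂.1 (hcov hz)
    exact Set.mem_biUnion hxmem (hUsub x x.2 ⟨hxz, hz⟩)
  have hle : μ K ≤ ∑ x ∈ t, μ {z | z - y x x.2 ∈ A} :=
    le_trans (measure_mono hKsub) (measure_biUnion_finset_le t _)
  simp only [hnull, Finset.sum_const_zero] at hle
  exact (hKpos.trans_le hle).false
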